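/- Let g be a finite-dimensional real Lie algebra equipped with an inner product ⟨·,·⟩; for u ∈ g let ad_u : g → g denote v ↦ ⁅u,v⁆ and ad*_u its adjoint with respect to ⟨·,·⟩. Let X ∈ g satisfy ad*_X = −ad_X and let Φ(t) := exp(t·ad_X). Suppose v, w ∈ g and λ, σ, ρ ∈ ℝ satisfy ad*_v X = λ·w, ad*_w X = −λ·v, ad*_v v = 0, ad*_w w = 0, and ad*_v w + ad*_w v = 0. Then the curve U(t) := X + ρ·Φ(t)(cos(σ+λt)·v − sin(σ+λt)·w) satisfies the Euler–Arnold equation U'(t) = −ad*_{U(t)} U(t) for all t ∈ ℝ. -/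

import Mathlib

open scoped RealInnerProductSpace

variable {g : Type*} [NormedAddCommGroup g] [InnerProductSpace ℝ g] [FiniteDimensional ℝ g]

/-- The adjoint operator `ad_u : v ↦ ⁅u, v⁆` of a Lie bracket `br`, as a
continuous linear map on the finite-dimensional space `g`. -/
noncomputable def adOp (br : g →ₗ[ℝ] g →ₗ[ℝ] g) (u : g) : g →L[ℝ] g :=
  LinearMap.toContinuousLinearMap (br u)

/-- The coadjoint operator `ad*_u`, the adjoint of `ad_u` with respect to the
inner product. -/
noncomputable def adStarOp (br : g →ₗ[ℝ] g →ₗ[ℝ] g) (u : g) : g →L[ℝ] g :=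
  ContinuousLinearMap.adjoint (adOp br u)

/-- The operator exponential `Φ(t) = exp(t ad_X)`. -/
noncomputable def phiExp (br : g →ₗ[ℝ] g →ₗ[ℝ] g) (X : g) (t : ℝ) : g →L[ℝ] g :=
  NormedSpace.exp (t • adOp br X)

section Aux

set_option maxHeartbeats 1000000
set_option synthInstance.maxHeartbeats 400000

variable (br : g →ₗ[ℝ] g →ₗ[ℝ] g)

lemma adOp_apply (u y : g) : adOp br u y = br u y := rfl

lemma adOp_add (a b : g) : adOp br (a + b) = adOp br a + adOp br b := by
  ext y; simp [adOp]

lemma adOp_smul (c : ℝ) (a : g) : adOp br (c • a) = c • adOp br a := by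
  ext y; simp [adOp]

lemma adOp_sub (a b : g) : adOp br (a - b) = adOp br a - adOp br b := by
  ext y; simp [adOp, sub_smul, map_sub]

lemma adStarOp_add (a b : g) : adStarOp br (a + b) = adStarOp br a + adStarOp br b := by
  rw [adStarOp, adOp_add, map_add]; rfl

lemma adStarOp_smul (c : ℝ) (a : g) : adStarOp br (c • a) = c • adStarOp br a := by
  rw [adStarOp, adOp_smul]
  simp [adStarOp]

lemma adStarOp_sub (a b : g) : adStarOp br (a - b) = adStarOp br a - adStarOp br b := by
  rw [adStarOp, adOp_sub, map_sub]; rfl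

/-- `u ↦ ad_u` as a continuous linear map. -/
noncomputable def adL : g →L[ℝ] (g →L[ℝ] g) :=
  LinearMap.toContinuousLinearMap
    { toFun := fun u => adOp br u
      map_add' := adOp_add br
      map_smul' := adOp_smul br }

lemma adL_apply (u : g) : adL br u = adOp br u := rfl

lemma phi_deriv (X : g) (t : ℝ) :
    HasDerivAt (fun s : ℝ => phiExp br X s) (adOp br X * phiExp br X t) t :=
  hasDerivAt_exp_smul_const' (𝕂 := ℝ) (adOp br X) t

lemma phi_mul (X : g) (s t : ℝ) : phiExp br X s * phiExp br X t = phiExp br X (s + t) := by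
  letI : NormedAlgebra ℚ (g →L[ℝ] g) := NormedAlgebra.restrictScalars ℚ ℝ (g →L[ℝ] g)
  rw [phiExp, phiExp, phiExp, add_smul, NormedSpace.exp_add_of_commute]
  exact ((Commute.refl (adOp br X)).smul_left s).smul_right t

lemma phi_zero (X : g) : phiExp br X 0 = 1 := by
  rw [phiExp, zero_smul, NormedSpace.exp_zero]

lemma phi_comm (X : g) (t : ℝ) :
    adOp br X * phiExp br X t = phiExp br X t * adOp br X := by
  have h : Commute (adOp br X) (t • adOp br X) := (Commute.refl _).smul_right t
  exact (h.exp_right).eq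

lemma phi_neg_apply (X : g) (t : ℝ) (y : g) :
    phiExp br X (-t) (phiExp br X t y) = y := by
  have : phiExp br X (-t) * phiExp br X t = 1 := by
    rw [phi_mul, neg_add_cancel, phi_zero]
  calc phiExp br X (-t) (phiExp br X t y)
      = (phiExp br X (-t) * phiExp br X t) y := rfl
    _ = y := by rw [this]; rfl

/-- constancy from zero derivative -/
lemma const_of_deriv_zero {f : ℝ → g} (h : ∀ t, HasDerivAt f 0 t) (a b : ℝ) : f a = f b := by
  apply is_const_of_fderiv_eq_zero (𝕜 := ℝ) (fun t => (h t).differentiableAt)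
  intro t
  have h0 : HasFDerivAt f (0 : ℝ →L[ℝ] g) t := by
    have := (h t).hasFDerivAt
    convert this using 1
    ext r; simp
    simp
  exact h0.fderiv

lemma phi_apply_deriv (X : g) (x : g) (t : ℝ) :
    HasDerivAt (fun s : ℝ => phiExp br X s x) (adOp br X (phiExp br X t x)) t := by
  have h := (phi_deriv br X t).clm_apply (hasDerivAt_const t x)
  simpa [ContinuousLinearMap.mul_apply] using h

lemma phi_fix (X : g) (hXX : br X X = 0) (t : ℝ) : phiExp br X t X = X := by
  have h : ∀ s : ℝ, HasDerivAt (fun s : ℝ => phiExp br X s X) 0 s := by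
    intro s
    have h1 := phi_apply_deriv br X X s
    have h2 : adOp br X (phiExp br X s X) = 0 := by
      have : adOp br X * phiExp br X s = phiExp br X s * adOp br X := phi_comm br X s
      calc adOp br X (phiExp br X s X) = (adOp br X * phiExp br X s) X := rfl
        _ = (phiExp br X s * adOp br X) X := by rw [this]
        _ = phiExp br X s (adOp br X X) := rfl
        _ = 0 := by rw [adOp_apply, hXX, map_zero]
    rwa [h2] at h1
  have := const_of_deriv_zero (g := g) h t 0
  rw [this, phi_zero]; rfl

lemma phi_auto (X : g)
    (hder : ∀ x y : g, br X (br x y) = br (br X x) y + br x (br X y))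
    (t : ℝ) (x y : g) :
    phiExp br X t (br x y) = br (phiExp br X t x) (phiExp br X t y) := by
  set A := adOp br X with hA
  -- the function k s = Φ(-s) (br (Φ s x) (Φ s y)) is constant
  have hk : ∀ s : ℝ, HasDerivAt
      (fun s : ℝ => phiExp br X (-s) (adL br (phiExp br X s x) (phiExp br X s y))) 0 s := by
    intro s
    have hp := phi_apply_deriv br X x s
    have hq := phi_apply_deriv br X y s
    have hΦneg : HasDerivAt (fun u : ℝ => phiExp br X (-u))
        ((-1 : ℝ) • (A * phiExp br X (-s))) s := by
      have := (phi_deriv br X (-s)).scomp s (hasDerivAt_neg s)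
      exact this
    have hc : HasDerivAt (fun u : ℝ => adL br (phiExp br X u x))
        (adL br (A (phiExp br X s x))) s :=
      (adL br).hasFDerivAt.comp_hasDerivAt s hp
    have hr := hc.clm_apply hq
    have hkk := hΦneg.clm_apply hr
    have hzero :
        ((-1 : ℝ) • (A * phiExp br X (-s))) (adL br (phiExp br X s x) (phiExp br X s y)) +
          phiExp br X (-s) (adL br (A (phiExp br X s x)) (phiExp br X s y) +
            adL br (phiExp br X s x) (A (phiExp br X s y))) = 0 := by
      set p := phiExp br X s x
      set q := phiExp br X s y
      have hcomm : A * phiExp br X (-s) = phiExp br X (-s) * A := phi_comm br X (-s)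
      have e1 : (A * phiExp br X (-s)) (adL br p q) = phiExp br X (-s) (A (br p q)) := by
        rw [hcomm]; rfl
      have e2 : A (br p q) = br (A p) q + br p (A q) := by
        rw [hA, adOp_apply, adOp_apply, adOp_apply, hder p q]
      rw [ContinuousLinearMap.smul_apply, e1, e2]
      have e3 : adL br (A p) q + adL br p (A q) = br (A p) q + br p (A q) := rfl
      rw [e3]
      simp only [map_add, neg_smul, one_smul, ContinuousLinearMap.neg_apply]
      abel
    rwa [hzero] at hkk
  have hconst := const_of_deriv_zero (g := g) hk t 0
  rw [neg_zero, phi_zero] at hconst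
  have hconst' : phiExp br X (-t) (br (phiExp br X t x) (phiExp br X t y)) = br x y := by
    have : adL br (phiExp br X t x) (phiExp br X t y) = br (phiExp br X t x) (phiExp br X t y) := rfl
    rw [this] at hconst
    simpa [adL_apply, adOp_apply] using hconst
  calc phiExp br X t (br x y)
      = phiExp br X t (phiExp br X (-t) (br (phiExp br X t x) (phiExp br X t y))) := by
        rw [hconst']
    _ = br (phiExp br X t x) (phiExp br X t y) := by
        have := phi_neg_apply br X (-t) (br (phiExp br X t x) (phiExp br X t y))
        simpa using this

lemma phi_adjoint (X : g) (hX : adStarOp br X = -adOp br X) (t : ℝ) :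
    ContinuousLinearMap.adjoint (phiExp br X t) = phiExp br X (-t) := by
  rw [phiExp, ← ContinuousLinearMap.star_eq_adjoint, NormedSpace.star_exp, star_smul,
    ContinuousLinearMap.star_eq_adjoint]
  have : ContinuousLinearMap.adjoint (adOp br X) = -adOp br X := hX
  rw [this, phiExp, smul_neg, ← neg_smul]
  simp [star_trivial]

lemma adOp_conj (X : g)
    (hder : ∀ x y : g, br X (br x y) = br (br X x) y + br x (br X y))
    (t : ℝ) (z : g) :
    adOp br (phiExp br X t z) =
      phiExp br X t ∘L adOp br z ∘L phiExp br X (-t) := by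
  ext y
  have : y = phiExp br X t (phiExp br X (-t) y) := by
    have := phi_neg_apply br X (-t) y
    simp only [neg_neg] at this
    exact this.symm
  calc adOp br (phiExp br X t z) y = br (phiExp br X t z) y := rfl
    _ = br (phiExp br X t z) (phiExp br X t (phiExp br X (-t) y)) := by rw [← this]
    _ = phiExp br X t (br z (phiExp br X (-t) y)) := (phi_auto br X hder t z _).symm
    _ = (phiExp br X t ∘L adOp br z ∘L phiExp br X (-t)) y := rfl

lemma adStar_conj (X : g) (hX : adStarOp br X = -adOp br X)
    (hder : ∀ x y : g, br X (br x y) = br (br X x) y + br x (br X y))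
    (t : ℝ) (z : g) :
    adStarOp br (phiExp br X t z) =
      phiExp br X t ∘L adStarOp br z ∘L phiExp br X (-t) := by
  rw [adStarOp, adOp_conj br X hder t z, ContinuousLinearMap.adjoint_comp,
    ContinuousLinearMap.adjoint_comp, phi_adjoint br X hX, phi_adjoint br X hX, neg_neg]
  rw [adStarOp]
  rfl

end Aux

set_option maxHeartbeats 1000000 in
set_option synthInstance.maxHeartbeats 400000 in
/-- Theorem 5.6 in the finite-dimensional real Lie algebra
setting (the Lie algebra is a finite-dimensional real inner product space `g`
with an antisymmetric bilinear bracket `br` satisfying the Jacobi identity).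
If `ad*_X = -ad_X`, `ad*_v X = λ w`, `ad*_w X = -λ v`, `ad*_v v = 0`,
`ad*_w w = 0` and `ad*_v w + ad*_w v = 0`, then
`U(t) = X + ρ Φ(t)(cos(σ+λt) v - sin(σ+λt) w)` solves the Euler–Arnold
equation `U' = -ad*_U U`. -/
theorem statement16 (br : g →ₗ[ℝ] g →ₗ[ℝ] g)
    (hanti : ∀ x y : g, br x y = -br y x)
    (hjacobi : ∀ x y z : g, br (br x y) z + br (br y z) x + br (br z x) y = 0)
    (X : g) (hX : adStarOp br X = -adOp br X)
    (v w : g) (lam sig rho : ℝ)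
    (h1 : adStarOp br v X = lam • w)
    (h2 : adStarOp br w X = -(lam • v))
    (h3 : adStarOp br v v = 0)
    (h4 : adStarOp br w w = 0)
    (h5 : adStarOp br v w + adStarOp br w v = 0) :
    ∀ t : ℝ,
      HasDerivAt
        (fun s : ℝ => X + rho •
          phiExp br X s (Real.cos (sig + lam * s) • v - Real.sin (sig + lam * s) • w))
        (-(adStarOp br
            (X + rho •
              phiExp br X t (Real.cos (sig + lam * t) • v - Real.sin (sig + lam * t) • w))
            (X + rho •
              phiExp br X t (Real.cos (sig + lam * t) • v - Real.sin (sig + lam * t) • w)))) t := by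
  intro t
  -- basic bracket facts
  have hXX : br X X = 0 := by
    have h := hanti X X
    have h2' : (2 : ℝ) • br X X = 0 := by
      rw [two_smul]; nth_rewrite 2 [h]; simp
    simpa using (smul_eq_zero.mp h2').resolve_left (by norm_num)
  have hder : ∀ x y : g, br X (br x y) = br (br X x) y + br x (br X y) := by
    intro x y
    have hj := hjacobi x y X
    have e1 : br (br x y) X = -br X (br x y) := hanti _ _
    have e2 : br (br y X) x = br x (br X y) := by
      rw [hanti y X, map_neg, LinearMap.neg_apply, ← hanti]
    rw [e1, e2] at hj
    refine eq_of_sub_eq_zero ?_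
    have h2' : br X (br x y) - (br (br X x) y + br x (br X y)) =
        -(-br X (br x y) + br x (br X y) + br (br X x) y) := by abel
    rw [h2', hj, neg_zero]
  -- abbreviations
  set c := Real.cos (sig + lam * t) with hc
  set sn := Real.sin (sig + lam * t) with hsn
  set z := c • v - sn • w with hzdef
  set F := phiExp br X t z with hFdef
  -- the derivative of the curve
  have hin : HasDerivAt (fun s : ℝ => sig + lam * s) lam t := by
    simpa using ((hasDerivAt_id t).const_mul lam).const_add sig
  have hz : HasDerivAt
      (fun s : ℝ => Real.cos (sig + lam * s) • v - Real.sin (sig + lam * s) • w)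
      ((-sn * lam) • v - (c * lam) • w) t :=
    ((hin.cos).smul_const v).sub ((hin.sin).smul_const w)
  have hF := (phi_deriv br X t).clm_apply hz
  have hU := (hF.const_smul rho).const_add X
  convert hU using 1
  · rfl
  -- now prove the algebraic identity for the derivative
  have hconj := adStar_conj br X hX hder t z
  have e0 : adOp br X X = 0 := by rw [adOp_apply, hXX]
  have hSX : adStarOp br z X = (lam * c) • w + (lam * sn) • v := by
    rw [hzdef, adStarOp_sub, adStarOp_smul, adStarOp_smul]
    simp only [ContinuousLinearMap.sub_apply, ContinuousLinearMap.smul_apply, h1, h2,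
      smul_smul, smul_neg]
    module
  have h5' : adStarOp br w v = -adStarOp br v w := by
    have := h5
    linear_combination (norm := abel) this
  have hSz : adStarOp br z z = 0 := by
    rw [hzdef, adStarOp_sub, adStarOp_smul, adStarOp_smul]
    simp only [ContinuousLinearMap.sub_apply, ContinuousLinearMap.smul_apply, map_sub,
      map_smul, h3, h4, h5']
    module
  have eS1 : adStarOp br F X = phiExp br X t ((lam * c) • w + (lam * sn) • v) := by
    rw [hFdef, hconj]
    simp only [ContinuousLinearMap.comp_apply]
    rw [phi_fix br X hXX (-t), hSX]
  have eS2 : adStarOp br F F = 0 := by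
    rw [hFdef, hconj]
    simp only [ContinuousLinearMap.comp_apply]
    rw [phi_neg_apply br X t z, hSz, map_zero]
  have etot : adStarOp br (X + rho • F) (X + rho • F) =
      -(rho • adOp br X F) + rho • phiExp br X t ((lam * c) • w + (lam * sn) • v) := by
    rw [adStarOp_add, adStarOp_smul, hX]
    simp only [ContinuousLinearMap.add_apply, ContinuousLinearMap.smul_apply,
      ContinuousLinearMap.neg_apply, map_add, map_smul, e0, eS1, eS2]
    module
  rw [etot]
  have emul : (adOp br X * phiExp br X t) z = adOp br X F := rfl
  rw [emul]
  have ephi : phiExp br X t ((-sn * lam) • v - (c * lam) • w) =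
      -(phiExp br X t ((lam * c) • w + (lam * sn) • v)) := by
    simp only [map_sub, map_neg, map_add, map_smul]
    module
  rw [ephi]
  module
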